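/- For the system Xᵢ' = Xᵢ(∑ⱼ Xⱼ² − 1) + λᵢYᵢ²/√dᵢ, Yᵢ' = Yᵢ(∑ⱼ Xⱼ² − Xᵢ/√dᵢ), i = 1,…,r, the function 𝓛 = ∑ᵢ (Xᵢ² + λᵢYᵢ²) − 1 satisfies 𝓛' = 2𝓛·(∑ᵢ Xᵢ²) along any solution. -/

import Mathlib

open Finset

/-- Along any solution of the soliton subsystem, the Lyapunov
`𝓛 = ∑ (Xᵢ² + λᵢ Yᵢ²) − 1` satisfies `𝓛' = 2 𝓛 ∑ Xᵢ²`. -/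
theorem stmt_1 (r : ℕ) (d lam : Fin r → ℝ) (hd : ∀ i, 0 < d i)
    (X Y : ℝ → Fin r → ℝ)
    (hX : ∀ i s, HasDerivAt (fun s => X s i)
      (X s i * ((∑ j, (X s j) ^ 2) - 1) + lam i * (Y s i) ^ 2 / Real.sqrt (d i)) s)
    (hY : ∀ i s, HasDerivAt (fun s => Y s i)
      (Y s i * ((∑ j, (X s j) ^ 2) - X s i / Real.sqrt (d i))) s) :
    ∀ s, HasDerivAt (fun s => (∑ i, ((X s i) ^ 2 + lam i * (Y s i) ^ 2)) - 1)
      (2 * ((∑ i, ((X s i) ^ 2 + lam i * (Y s i) ^ 2)) - 1) * (∑ i, (X s i) ^ 2)) s := by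
  intro s
  have h : ∀ i ∈ (univ : Finset (Fin r)), HasDerivAt
      (fun s => (X s i) ^ 2 + lam i * (Y s i) ^ 2)
      (2 * X s i * (X s i * ((∑ j, (X s j) ^ 2) - 1) + lam i * (Y s i) ^ 2 / Real.sqrt (d i))
        + lam i * (2 * Y s i * (Y s i * ((∑ j, (X s j) ^ 2) - X s i / Real.sqrt (d i))))) s := by
    intro i _
    have h1 := ((hX i s).fun_pow 2)
    have h2 := ((hY i s).fun_pow 2).const_mul (lam i)
    have := h1.fun_add h2
    refine this.congr_deriv ?_
    ring
  have hsum := HasDerivAt.fun_sum h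
  have := hsum.sub_const 1
  refine this.congr_deriv ?_
  have key : ∀ i ∈ (univ : Finset (Fin r)),
      2 * X s i * (X s i * ((∑ j, (X s j) ^ 2) - 1) + lam i * (Y s i) ^ 2 / Real.sqrt (d i))
        + lam i * (2 * Y s i * (Y s i * ((∑ j, (X s j) ^ 2) - X s i / Real.sqrt (d i)))) =
      2 * (((X s i) ^ 2 + lam i * (Y s i) ^ 2) * (∑ j, (X s j) ^ 2)) - 2 * (X s i) ^ 2 := by
    intro i _
    ring
  rw [Finset.sum_congr rfl key, Finset.sum_sub_distrib, ← Finset.mul_sum, ← Finset.mul_sum,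
    ← Finset.sum_mul]
  ring
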